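/- Let X and Z be finite nonempty types, let p : X × Z → ℝ be a strictly positive joint probability mass function with marginals p_X, p_Z and conditionals p(z|x) = p(x,z)/p_X(x), p(x|z) = p(x,z)/p_Z(z). Fix N ≥ 1. Define the density-ratio critic f(x,z) = p(x|z)/p_X(x), and define the InfoNCE loss with N samples as the expectation L_N = ∑_{z ∈ Z} ∑_{(x₁,…,x_N) ∈ X^N} p(x₁,z) · (∏_{j=2}^{N} p_X(x_j)) · ( − log( f(x₁,z) / ∑_{j=1}^{N} f(x_j,z) ) ), i.e., the expected negative log-probability of identifying the positive sample x₁ (drawn jointly with z) among N−1 independent negatives drawn from the marginal p_X. Then the mutual information I(X;Z) = ∑_{x,z} p(x,z) log( p(x,z)/(p_X(x) p_Z(z)) ) satisfies I(X;Z) ≥ log N − L_N. -/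

import Mathlib

open Finset

private lemma sum_pi_prod' {X : Type*} [Fintype X] {N : ℕ} (h : Fin N → X → ℝ) :
    ∑ xs : Fin N → X, ∏ j, h j (xs j) = ∏ j, ∑ x, h j x := by
  rw [Finset.prod_univ_sum]
  simp [Fintype.piFinset_univ]

private lemma marg_aux {X : Type*} [Fintype X] {N : ℕ} (k : Fin N) (q h : X → ℝ)
    (hq : ∑ x, q x = 1) :
    ∑ xs : Fin N → X, h (xs k) * ∏ j ∈ Finset.univ.erase k, q (xs j) = ∑ x, h x := by
  classical
  calc ∑ xs : Fin N → X, h (xs k) * ∏ j ∈ Finset.univ.erase k, q (xs j)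
      = ∑ xs : Fin N → X, ∏ j, (fun j x => if j = k then h x else q x) j (xs j) := by
        refine Finset.sum_congr rfl fun xs _ => ?_
        rw [← Finset.mul_prod_erase Finset.univ _ (mem_univ k)]
        simp only [if_pos rfl]
        congr 1
        exact Finset.prod_congr rfl fun j hj => by
          simp [Finset.ne_of_mem_erase hj]
    _ = ∏ j, ∑ x, (fun j x => if j = k then h x else q x) j x :=
        sum_pi_prod' (fun j x => if j = k then h x else q x)
    _ = (∑ x, h x) * ∏ j ∈ Finset.univ.erase k, ∑ x, q x := by
        rw [← Finset.mul_prod_erase Finset.univ _ (mem_univ k)]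
        simp only [if_pos rfl]
        congr 1
        exact Finset.prod_congr rfl fun j hj => by
          simp [Finset.ne_of_mem_erase hj]
    _ = ∑ x, h x := by rw [hq]; simp

private lemma margk_aux {X : Type*} [Fintype X] {N : ℕ} (k : Fin N) (q g : X → ℝ)
    (hq : ∑ x, q x = 1) :
    ∑ xs : Fin N → X, (∏ j, q (xs j)) * g (xs k) = ∑ x, q x * g x := by
  calc ∑ xs : Fin N → X, (∏ j, q (xs j)) * g (xs k)
      = ∑ xs : Fin N → X, (q (xs k) * g (xs k)) * ∏ j ∈ Finset.univ.erase k, q (xs j) := by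
        refine Finset.sum_congr rfl fun xs _ => ?_
        rw [← Finset.mul_prod_erase Finset.univ (fun j => q (xs j)) (mem_univ k)]
        ring
    _ = ∑ x, q x * g x := marg_aux k q (fun x => q x * g x) hq

private lemma sub_one_le_mul_log (x : ℝ) (hx : 0 < x) : x - 1 ≤ x * Real.log x := by
  nlinarith [Real.log_le_sub_one_of_pos (inv_pos.2 hx), Real.log_inv x, mul_inv_cancel₀ hx.ne']

private lemma sym_aux {X : Type*} [Fintype X] {N : ℕ} (hN : 1 ≤ N) (q g : X → ℝ) (φ : ℝ → ℝ) :
    (N : ℝ) * ∑ xs : Fin N → X, (∏ j, q (xs j)) * (g (xs ⟨0, hN⟩) * φ (∑ j, g (xs j)))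
      = ∑ xs : Fin N → X, (∏ j, q (xs j)) * ((∑ j, g (xs j)) * φ (∑ j, g (xs j))) := by
  set i0 : Fin N := ⟨0, hN⟩
  have hk : ∀ k : Fin N,
      ∑ xs : Fin N → X, (∏ j, q (xs j)) * (g (xs k) * φ (∑ j, g (xs j)))
        = ∑ xs : Fin N → X, (∏ j, q (xs j)) * (g (xs i0) * φ (∑ j, g (xs j))) := by
    intro k
    refine (Fintype.sum_equiv ((Equiv.swap i0 k).arrowCongr (Equiv.refl X)) _ _
      fun xs => ?_).symm
    have h1 : ∏ j, q (xs (Equiv.swap i0 k j)) = ∏ j, q (xs j) :=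
      Equiv.prod_comp (Equiv.swap i0 k) (fun j => q (xs j))
    have h2 : ∑ j, g (xs (Equiv.swap i0 k j)) = ∑ j, g (xs j) :=
      Equiv.sum_comp (Equiv.swap i0 k) (fun j => g (xs j))
    simp only [Equiv.arrowCongr_apply, Function.comp, Equiv.refl_apply, Equiv.symm_swap]
    rw [h1, h2, Equiv.swap_apply_right]
  calc (N : ℝ) * ∑ xs : Fin N → X, (∏ j, q (xs j)) * (g (xs i0) * φ (∑ j, g (xs j)))
      = ∑ k : Fin N, ∑ xs : Fin N → X, (∏ j, q (xs j)) * (g (xs k) * φ (∑ j, g (xs j))) := by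
        simp [hk]
    _ = ∑ xs : Fin N → X, ∑ k : Fin N, (∏ j, q (xs j)) * (g (xs k) * φ (∑ j, g (xs j))) :=
        Finset.sum_comm
    _ = ∑ xs : Fin N → X, (∏ j, q (xs j)) * ((∑ j, g (xs j)) * φ (∑ j, g (xs j))) := by
        refine Finset.sum_congr rfl fun xs _ => ?_
        rw [← Finset.mul_sum, ← Finset.sum_mul]

/-- (van den Oord et al.) For a strictly positive joint pmf `p` on
`X × Z`, the InfoNCE loss `L` with `N` samples and density-ratio critic
`f x z = p(x|z) / p_X(x)` lower-bounds the mutual information: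
`I(X;Z) ≥ log N − L`. -/
theorem mutualInformation_ge_log_sub_infoNCE
    {X Z : Type*} [Fintype X] [Fintype Z] [Nonempty X] [Nonempty Z]
    (p : X × Z → ℝ)
    (hpos : ∀ x z, 0 < p (x, z))
    (hsum : ∑ x : X, ∑ z : Z, p (x, z) = 1)
    (N : ℕ) (hN : 1 ≤ N)
    (f : X → Z → ℝ)
    (hf : ∀ x z, f x z = (p (x, z) / ∑ x' : X, p (x', z)) / ∑ z' : Z, p (x, z'))
    (L : ℝ)
    (hL : L = ∑ z : Z, ∑ xs : Fin N → X,
        p (xs ⟨0, hN⟩, z) * (∏ j ∈ Finset.univ.erase (⟨0, hN⟩ : Fin N), ∑ z' : Z, p (xs j, z'))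
          * (- Real.log (f (xs ⟨0, hN⟩) z / ∑ j : Fin N, f (xs j) z))) :
    ∑ x : X, ∑ z : Z,
        p (x, z) * Real.log (p (x, z) / ((∑ z' : Z, p (x, z')) * (∑ x' : X, p (x', z))))
      ≥ Real.log N - L := by
  classical
  set i0 : Fin N := ⟨0, hN⟩ with hi0def
  set pX : X → ℝ := fun x => ∑ z' : Z, p (x, z') with hpXdef
  set pZ : Z → ℝ := fun z => ∑ x' : X, p (x', z) with hpZdef
  have hpX : ∀ x, 0 < pX x := fun x => Finset.sum_pos (fun z _ => hpos x z) univ_nonempty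
  have hpZ : ∀ z, 0 < pZ z := fun z => Finset.sum_pos (fun x _ => hpos x z) univ_nonempty
  have hf' : ∀ x z, f x z = p (x, z) / (pZ z * pX x) := by
    intro x z; rw [hf, div_div]
  have hfpos : ∀ x z, 0 < f x z := fun x z => by
    rw [hf']; exact div_pos (hpos x z) (mul_pos (hpZ z) (hpX x))
  have hp_eq : ∀ x z, p (x, z) = pZ z * (f x z * pX x) := by
    intro x z
    rw [hf']
    field_simp [(hpZ z).ne', (hpX x).ne']
  have hsum1 : ∑ x, pX x = 1 := hsum
  have hfsum : ∀ z, ∑ x, pX x * f x z = 1 := by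
    intro z
    have h1 : ∀ x ∈ Finset.univ, pX x * f x z = p (x, z) / pZ z := by
      intro x _
      rw [hf']
      field_simp [(hpZ z).ne', (hpX x).ne']
    rw [Finset.sum_congr rfl h1, ← Finset.sum_div]
    exact div_self (hpZ z).ne'
  -- positivity of sums of critics
  have hSpos : ∀ z (xs : Fin N → X), 0 < ∑ j, f (xs j) z := fun z xs =>
    Finset.sum_pos (fun j _ => hfpos (xs j) z)
      (univ_nonempty_iff.mpr ⟨i0⟩)
  -- marginalization lemma
  have hmarg : ∀ (g : X → ℝ),
      ∑ xs : Fin N → X, g (xs i0) * ∏ j ∈ Finset.univ.erase i0, pX (xs j) = ∑ x, g x :=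
    fun g => marg_aux i0 pX g hsum1
  have hmargk : ∀ (k : Fin N) (g : X → ℝ),
      ∑ xs : Fin N → X, (∏ j, pX (xs j)) * g (xs k) = ∑ x, pX x * g x :=
    fun k g => margk_aux k pX g hsum1
  -- the mutual information
  set I : ℝ := ∑ x : X, ∑ z : Z, p (x, z) * Real.log (p (x, z) / (pX x * pZ z)) with hIdef
  have hI : I = ∑ z : Z, ∑ x : X, p (x, z) * Real.log (f x z) := by
    rw [hIdef, Finset.sum_comm]
    refine Finset.sum_congr rfl fun z _ => Finset.sum_congr rfl fun x _ => ?_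
    rw [hf', mul_comm (pZ z)]
  -- rewrite L
  have hL' : L = ∑ z : Z, ∑ xs : Fin N → X,
      (p (xs i0, z) * ∏ j ∈ Finset.univ.erase i0, pX (xs j))
        * (Real.log (∑ j, f (xs j) z) - Real.log (f (xs i0) z)) := by
    rw [hL]
    refine Finset.sum_congr rfl fun z _ => Finset.sum_congr rfl fun xs _ => ?_
    rw [Real.log_div (hfpos (xs i0) z).ne' (hSpos z xs).ne']
    ring
  -- I as an expectation over the batch
  have hIbatch : I = ∑ z : Z, ∑ xs : Fin N → X,
      (p (xs i0, z) * ∏ j ∈ Finset.univ.erase i0, pX (xs j)) * Real.log (f (xs i0) z) := by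
    rw [hI]
    refine Finset.sum_congr rfl fun z _ => ?_
    rw [← hmarg (fun x => p (x, z) * Real.log (f x z))]
    exact Finset.sum_congr rfl fun xs _ => by ring
  -- total mass of the batch distribution
  have hmass : ∑ z : Z, ∑ xs : Fin N → X,
      (p (xs i0, z) * ∏ j ∈ Finset.univ.erase i0, pX (xs j)) = 1 := by
    have : ∀ z, ∑ xs : Fin N → X,
        p (xs i0, z) * ∏ j ∈ Finset.univ.erase i0, pX (xs j) = ∑ x, p (x, z) :=
      fun z => hmarg (fun x => p (x, z))
    rw [Finset.sum_congr rfl fun z _ => this z, Finset.sum_comm]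
    exact hsum
  -- I + L as a single expectation
  have hIL : I + L = ∑ z : Z, ∑ xs : Fin N → X,
      (p (xs i0, z) * ∏ j ∈ Finset.univ.erase i0, pX (xs j)) * Real.log (∑ j, f (xs j) z) := by
    rw [hIbatch, hL', ← Finset.sum_add_distrib]
    refine Finset.sum_congr rfl fun z _ => ?_
    rw [← Finset.sum_add_distrib]
    exact Finset.sum_congr rfl fun xs _ => by ring
  have hlogN : ∑ z : Z, ∑ xs : Fin N → X,
      (p (xs i0, z) * ∏ j ∈ Finset.univ.erase i0, pX (xs j)) * Real.log N = Real.log N := by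
    simp only [← Finset.sum_mul]
    rw [hmass, one_mul]
  -- combine: I + L - log N as a single expectation
  have hKey : I + L - Real.log N = ∑ z : Z, pZ z * ∑ xs : Fin N → X,
      (∏ j, pX (xs j)) * (f (xs i0) z *
        Real.log ((∑ j, f (xs j) z) / N)) := by
    calc I + L - Real.log N
        = (∑ z : Z, ∑ xs : Fin N → X,
            (p (xs i0, z) * ∏ j ∈ Finset.univ.erase i0, pX (xs j)) * Real.log (∑ j, f (xs j) z))
          - ∑ z : Z, ∑ xs : Fin N → X,
            (p (xs i0, z) * ∏ j ∈ Finset.univ.erase i0, pX (xs j)) * Real.log N := by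
          rw [hIL, hlogN]
      _ = ∑ z : Z, ∑ xs : Fin N → X,
            ((p (xs i0, z) * ∏ j ∈ Finset.univ.erase i0, pX (xs j)) * Real.log (∑ j, f (xs j) z)
              - (p (xs i0, z) * ∏ j ∈ Finset.univ.erase i0, pX (xs j)) * Real.log N) := by
          rw [← Finset.sum_sub_distrib]
          exact Finset.sum_congr rfl fun z _ => (Finset.sum_sub_distrib _ _).symm
      _ = ∑ z : Z, pZ z * ∑ xs : Fin N → X,
            (∏ j, pX (xs j)) * (f (xs i0) z * Real.log ((∑ j, f (xs j) z) / N)) := by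
          refine Finset.sum_congr rfl fun z _ => ?_
          rw [Finset.mul_sum]
          refine Finset.sum_congr rfl fun xs _ => ?_
          rw [Real.log_div (hSpos z xs).ne' (by positivity : (0:ℝ) < (N:ℝ)).ne',
            hp_eq (xs i0) z,
            ← Finset.mul_prod_erase Finset.univ (fun j => pX (xs j)) (mem_univ i0)]
          ring
  -- each inner expectation is nonnegative
  have hInner : ∀ z : Z, 0 ≤ ∑ xs : Fin N → X,
      (∏ j, pX (xs j)) * (f (xs i0) z * Real.log ((∑ j, f (xs j) z) / N)) := by
    intro z
    have hNpos : (0:ℝ) < (N:ℝ) := by positivity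
    have hsym := sym_aux hN pX (fun x => f x z) (fun t => Real.log (t / N))
    -- ∑ P = 1
    have hP1 : ∑ xs : Fin N → X, (∏ j, pX (xs j)) = 1 := by
      have := hmargk i0 (fun _ => (1:ℝ))
      simpa [hsum1] using this
    -- ∑ P * S = N
    have hPS : ∑ xs : Fin N → X, (∏ j, pX (xs j)) * (∑ j, f (xs j) z) = N := by
      calc ∑ xs : Fin N → X, (∏ j, pX (xs j)) * (∑ j, f (xs j) z)
          = ∑ xs : Fin N → X, ∑ k : Fin N, (∏ j, pX (xs j)) * f (xs k) z := by
            exact Finset.sum_congr rfl fun xs _ => by rw [Finset.mul_sum]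
        _ = ∑ k : Fin N, ∑ xs : Fin N → X, (∏ j, pX (xs j)) * f (xs k) z := Finset.sum_comm
        _ = ∑ k : Fin N, (1:ℝ) := Finset.sum_congr rfl fun k _ => by
            rw [hmargk k (fun x => f x z), hfsum z]
        _ = N := by simp
    have hlow : (N:ℝ) - N ≤ ∑ xs : Fin N → X,
        (∏ j, pX (xs j)) * ((∑ j, f (xs j) z) * Real.log ((∑ j, f (xs j) z) / N)) := by
      have hterm : ∀ xs : Fin N → X,
          (∏ j, pX (xs j)) * ((∑ j, f (xs j) z) - N)
            ≤ (∏ j, pX (xs j)) * ((∑ j, f (xs j) z) * Real.log ((∑ j, f (xs j) z) / N)) := by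
        intro xs
        have hPnn : 0 ≤ ∏ j, pX (xs j) := Finset.prod_nonneg fun j _ => (hpX (xs j)).le
        refine mul_le_mul_of_nonneg_left ?_ hPnn
        have hu : 0 < (∑ j, f (xs j) z) / N := div_pos (hSpos z xs) hNpos
        have := sub_one_le_mul_log _ hu
        have hNne : (N:ℝ) ≠ 0 := hNpos.ne'
        calc (∑ j, f (xs j) z) - (N:ℝ)
            = (N:ℝ) * ((∑ j, f (xs j) z) / N - 1) := by field_simp
          _ ≤ (N:ℝ) * ((∑ j, f (xs j) z) / N * Real.log ((∑ j, f (xs j) z) / N)) :=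
              mul_le_mul_of_nonneg_left this hNpos.le
          _ = (∑ j, f (xs j) z) * Real.log ((∑ j, f (xs j) z) / N) := by field_simp
      calc (N:ℝ) - N
          = ∑ xs : Fin N → X, (∏ j, pX (xs j)) * ((∑ j, f (xs j) z) - N) := by
            rw [Finset.sum_congr rfl
              (fun (xs : Fin N → X) _ => mul_sub (∏ j, pX (xs j)) _ _),
              Finset.sum_sub_distrib, hPS]
            rw [← Finset.sum_mul, hP1]
            ring
        _ ≤ _ := Finset.sum_le_sum fun xs _ => hterm xs
    have : 0 ≤ (N:ℝ) * ∑ xs : Fin N → X,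
        (∏ j, pX (xs j)) * (f (xs i0) z * Real.log ((∑ j, f (xs j) z) / N)) := by
      rw [hsym]
      linarith
    nlinarith
  have hfinal : 0 ≤ I + L - Real.log N := by
    rw [hKey]
    exact Finset.sum_nonneg fun z _ => mul_nonneg (hpZ z).le (hInner z)
  linarith
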